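/- Fix y ∈ ℝ and assume the almost-sure limit σ²(y) of S_N²(y)/N is strictly positive. For ε > 0 let A_N(ε) = { i ∈ {1,…,N} : |Z_{i,N}(y)| > ε π_i S_N(y) } and L_N(ε)² = ∑_{i ∈ A_N(ε)} (π_i⁻¹ − 1) Z_{i,N}(y)². Then for every ε > 0, L_N(ε)²/S_N²(y) → 0 as N → ∞, ℙ-almost surely. (Lemma 5: the Lindeberg-type condition for the Hájek CLT.) -/

import Mathlib

open MeasureTheory ProbabilityTheory Filter Topology

/-- First-order inclusion probability `πᵢ = n_N Xᵢ / ∑_{j<N} Xⱼ`. -/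
noncomputable def incl {Ω : Type*} (X : ℕ → Ω → ℝ) (n : ℕ → ℕ) (N i : ℕ) (ω : Ω) : ℝ :=
  (n N : ℝ) * X i ω / ∑ j ∈ Finset.range N, X j ω

/-- Indicator `1{Yᵢ ≤ y}`. -/
noncomputable def indLE {Ω : Type*} (Y : ℕ → Ω → ℝ) (y : ℝ) (i : ℕ) (ω : Ω) : ℝ :=
  if Y i ω ≤ y then 1 else 0

/-- Population distribution function `F_N(y) = N⁻¹ ∑_{i<N} 1{Yᵢ ≤ y}`. -/
noncomputable def empDF {Ω : Type*} (Y : ℕ → Ω → ℝ) (y : ℝ) (N : ℕ) (ω : Ω) : ℝ :=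
  (N : ℝ)⁻¹ * ∑ i ∈ Finset.range N, indLE Y y i ω

/-- The quantity `Z_{i,N}(y)` of Lemma 3 of the paper. -/
noncomputable def Zin {Ω : Type*} (Y X : ℕ → Ω → ℝ) (n : ℕ → ℕ) (y : ℝ) (i N : ℕ)
    (ω : Ω) : ℝ :=
  (indLE Y y i ω - empDF Y y N ω) -
    incl X n N i ω *
      (∑ j ∈ Finset.range N, (1 - incl X n N j ω) * (indLE Y y j ω - empDF Y y N ω)) /
      (∑ j ∈ Finset.range N, incl X n N j ω * (1 - incl X n N j ω))

/-- The quantity `S_N²(y) = ∑_{i<N} (πᵢ⁻¹ − 1) Z_{i,N}(y)²` of Lemma 3 of the paper. -/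
noncomputable def SN2 {Ω : Type*} (Y X : ℕ → Ω → ℝ) (n : ℕ → ℕ) (y : ℝ) (N : ℕ)
    (ω : Ω) : ℝ :=
  ∑ i ∈ Finset.range N, ((incl X n N i ω)⁻¹ - 1) * (Zin Y X n y i N ω) ^ 2

/-- The Lindeberg-type quantity `L_N(ε)² = ∑_{i ∈ A_N(ε)} (πᵢ⁻¹ − 1) Z_{i,N}(y)²`, where
`A_N(ε) = {i < N : |Z_{i,N}(y)| > ε πᵢ S_N(y)}`. -/
noncomputable def LN2 {Ω : Type*} (Y X : ℕ → Ω → ℝ) (n : ℕ → ℕ) (y ε : ℝ) (N : ℕ)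
    (ω : Ω) : ℝ :=
  ∑ i ∈ (Finset.range N).filter
      (fun i => ε * incl X n N i ω * Real.sqrt (SN2 Y X n y N ω) < |Zin Y X n y i N ω|),
    ((incl X n N i ω)⁻¹ - 1) * (Zin Y X n y i N ω) ^ 2

lemma indLE_cases {Ω : Type*} (Y : ℕ → Ω → ℝ) (y : ℝ) (i : ℕ) (ω : Ω) :
    indLE Y y i ω = 0 ∨ indLE Y y i ω = 1 := by
  unfold indLE; split
  · exact Or.inr rfl
  · exact Or.inl rfl

section
variable {Ω : Type*} (Y X : ℕ → Ω → ℝ) (n : ℕ → ℕ) (y : ℝ) (N : ℕ) (ω : Ω)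

lemma sA_eq (hN : 1 ≤ N) (hn : 1 ≤ n N) (hx : ∀ i, 0 < X i ω) :
    ∑ i ∈ Finset.range N, incl X n N i ω * (1 - incl X n N i ω)
      = (n N : ℝ) - (n N : ℝ)^2 * (∑ i ∈ Finset.range N, (X i ω)^2)
          / (∑ i ∈ Finset.range N, X i ω)^2 := by
  have hs : (0:ℝ) < ∑ i ∈ Finset.range N, X i ω :=
    Finset.sum_pos (fun i _ => hx i) (Finset.nonempty_range_iff.mpr (by omega))
  have hsne := ne_of_gt hs
  have h1 : ∀ i ∈ Finset.range N, incl X n N i ω * (1 - incl X n N i ω)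
      = (n N : ℝ) * X i ω / (∑ j ∈ Finset.range N, X j ω)
        - (n N:ℝ)^2 * (X i ω)^2 / (∑ j ∈ Finset.range N, X j ω)^2 := by
    intro i _
    simp only [incl]
    field_simp
  rw [Finset.sum_congr rfl h1, Finset.sum_sub_distrib]
  congr 1
  · rw [← Finset.sum_div, ← Finset.mul_sum, mul_div_assoc, div_self hsne, mul_one]
  · rw [← Finset.sum_div, ← Finset.mul_sum]

lemma sB_eq (hN : 1 ≤ N) (hn : 1 ≤ n N) (hx : ∀ i, 0 < X i ω) :
    ∑ i ∈ Finset.range N, (1 - incl X n N i ω) * (indLE Y y i ω - empDF Y y N ω)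
      = (n N : ℝ) * empDF Y y N ω - (n N : ℝ) * (∑ i ∈ Finset.range N, X i ω * indLE Y y i ω)
          / (∑ i ∈ Finset.range N, X i ω) := by
  have hs : (0:ℝ) < ∑ i ∈ Finset.range N, X i ω :=
    Finset.sum_pos (fun i _ => hx i) (Finset.nonempty_range_iff.mpr (by omega))
  have hsne := ne_of_gt hs
  have hNne : (N:ℝ) ≠ 0 := Nat.cast_ne_zero.mpr (by omega)
  have h1 : ∀ i ∈ Finset.range N, (1 - incl X n N i ω) * (indLE Y y i ω - empDF Y y N ω)
      = (indLE Y y i ω - empDF Y y N ω)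
        - ((n N:ℝ) * (X i ω * indLE Y y i ω) / (∑ j ∈ Finset.range N, X j ω)
           - empDF Y y N ω * ((n N:ℝ) * X i ω / (∑ j ∈ Finset.range N, X j ω))) := by
    intro i _
    simp only [incl]
    ring
  rw [Finset.sum_congr rfl h1, Finset.sum_sub_distrib, Finset.sum_sub_distrib,
    Finset.sum_sub_distrib]
  have h2 : (∑ i ∈ Finset.range N, indLE Y y i ω) - ∑ _i ∈ Finset.range N, empDF Y y N ω = 0 := by
    rw [Finset.sum_const, Finset.card_range, nsmul_eq_mul, empDF]
    field_simp
    ring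
  rw [h2]
  have h3 : ∑ i ∈ Finset.range N, (n N:ℝ) * (X i ω * indLE Y y i ω) / (∑ j ∈ Finset.range N, X j ω)
      = (n N : ℝ) * (∑ i ∈ Finset.range N, X i ω * indLE Y y i ω) / (∑ i ∈ Finset.range N, X i ω) := by
    rw [← Finset.sum_div, ← Finset.mul_sum]
  have h4 : ∑ i ∈ Finset.range N, empDF Y y N ω * ((n N:ℝ) * X i ω / (∑ j ∈ Finset.range N, X j ω))
      = (n N : ℝ) * empDF Y y N ω := by
    rw [← Finset.mul_sum, ← Finset.sum_div, ← Finset.mul_sum, mul_div_assoc, div_self hsne]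
    ring
  rw [h3, h4]; ring

end

section
variable {Ω : Type*} (Y X : ℕ → Ω → ℝ) (n : ℕ → ℕ) (y : ℝ) (N : ℕ) (ω : Ω)

lemma SN2_eq (hN : 1 ≤ N) (hn : 1 ≤ n N) (hx : ∀ i, 0 < X i ω) :
    SN2 Y X n y N ω =
      ((∑ i ∈ Finset.range N, X i ω) / (n N : ℝ)) *
          ((1 - 2*empDF Y y N ω) * (∑ i ∈ Finset.range N, (X i ω)⁻¹ * indLE Y y i ω)
            + (empDF Y y N ω)^2 * (∑ i ∈ Finset.range N, (X i ω)⁻¹))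
        - ((1 - 2*empDF Y y N ω) * (∑ i ∈ Finset.range N, indLE Y y i ω)
            + (N : ℝ) * (empDF Y y N ω)^2)
        - 2 * ((∑ i ∈ Finset.range N, (1 - incl X n N i ω) * (indLE Y y i ω - empDF Y y N ω))
              / (∑ i ∈ Finset.range N, incl X n N i ω * (1 - incl X n N i ω)))
            * (∑ i ∈ Finset.range N, (1 - incl X n N i ω) * (indLE Y y i ω - empDF Y y N ω))
        + ((∑ i ∈ Finset.range N, (1 - incl X n N i ω) * (indLE Y y i ω - empDF Y y N ω))
              / (∑ i ∈ Finset.range N, incl X n N i ω * (1 - incl X n N i ω)))^2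
            * (∑ i ∈ Finset.range N, incl X n N i ω * (1 - incl X n N i ω)) := by
  have hs : (0:ℝ) < ∑ i ∈ Finset.range N, X i ω :=
    Finset.sum_pos (fun i _ => hx i) (Finset.nonempty_range_iff.mpr (by omega))
  have hsne := ne_of_gt hs
  have hnne : (n N : ℝ) ≠ 0 := Nat.cast_ne_zero.mpr (by omega)
  have hterm : ∀ i ∈ Finset.range N, ((incl X n N i ω)⁻¹ - 1) * (Zin Y X n y i N ω) ^ 2
      = ((∑ j ∈ Finset.range N, X j ω) / (n N : ℝ)) *
            ((1 - 2*empDF Y y N ω) * ((X i ω)⁻¹ * indLE Y y i ω)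
              + (empDF Y y N ω)^2 * (X i ω)⁻¹)
        - ((1 - 2*empDF Y y N ω) * indLE Y y i ω + (empDF Y y N ω)^2)
        - 2 * ((∑ j ∈ Finset.range N, (1 - incl X n N j ω) * (indLE Y y j ω - empDF Y y N ω))
              / (∑ j ∈ Finset.range N, incl X n N j ω * (1 - incl X n N j ω)))
            * ((1 - incl X n N i ω) * (indLE Y y i ω - empDF Y y N ω))
        + ((∑ j ∈ Finset.range N, (1 - incl X n N j ω) * (indLE Y y j ω - empDF Y y N ω))
              / (∑ j ∈ Finset.range N, incl X n N j ω * (1 - incl X n N j ω)))^2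
            * (incl X n N i ω * (1 - incl X n N i ω)) := by
    intro i _
    simp only [Zin]
    rw [mul_div_assoc]
    generalize ((∑ j ∈ Finset.range N, (1 - incl X n N j ω) * (indLE Y y j ω - empDF Y y N ω))
        / (∑ j ∈ Finset.range N, incl X n N j ω * (1 - incl X n N j ω))) = r
    generalize empDF Y y N ω = FN
    have hxi := (hx i).ne'
    simp only [incl]
    rcases indLE_cases Y y i ω with h | h <;> rw [h] <;> field_simp <;> ring
  rw [SN2, Finset.sum_congr rfl hterm]
  simp only [Finset.sum_add_distrib, Finset.sum_sub_distrib, ← Finset.mul_sum,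
    Finset.sum_const, Finset.card_range, nsmul_eq_mul]

end
open MeasureTheory ProbabilityTheory Filter Topology Finset

set_option maxHeartbeats 1000000 in
lemma key {Ω : Type*} (Y X : ℕ → Ω → ℝ) (n : ℕ → ℕ) (y ε : ℝ) (ω : Ω)
    (hε : 0 < ε) (hx : ∀ i, 0 < X i ω)
    (f μ m2 minv F km1 k1 : ℝ) (t : ℕ → ℝ)
    (hf0 : 0 < f) (hμ : 0 < μ)
    (hn : Tendsto (fun N : ℕ => (n N : ℝ) / N) atTop (𝓝 f))
    (hs : Tendsto (fun N : ℕ => (∑ i ∈ Finset.range N, X i ω) / N) atTop (𝓝 μ))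
    (hT : Tendsto (fun N : ℕ => (∑ i ∈ Finset.range N, (X i ω)^2) / N) atTop (𝓝 m2))
    (hV : Tendsto (fun N : ℕ => (∑ i ∈ Finset.range N, (X i ω)⁻¹) / N) atTop (𝓝 minv))
    (hU : Tendsto (fun N : ℕ => (∑ i ∈ Finset.range N, indLE Y y i ω) / N) atTop (𝓝 F))
    (hPm1 : Tendsto (fun N : ℕ => (∑ i ∈ Finset.range N, (X i ω)⁻¹ * indLE Y y i ω) / N)
      atTop (𝓝 km1))
    (hP1 : Tendsto (fun N : ℕ => (∑ i ∈ Finset.range N, X i ω * indLE Y y i ω) / N)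
      atTop (𝓝 k1))
    (htr : ∀ M : ℕ, Tendsto (fun N : ℕ =>
        (∑ i ∈ Finset.range N, if (M:ℝ) < (X i ω)⁻¹ then (X i ω)⁻¹ else 0) / N)
      atTop (𝓝 (t M)))
    (ht0 : Tendsto t atTop (𝓝 0))
    (hdd : 0 < f - f^2*m2/μ^2)
    (hσ : 0 < μ/f*((1-2*F)*km1 + F^2*minv) - ((1-2*F)*F + F^2)
        - (f*F - f*k1/μ)^2/(f - f^2*m2/μ^2)) :
    Tendsto (fun N : ℕ => LN2 Y X n y ε N ω / SN2 Y X n y N ω) atTop (𝓝 0) := by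
  have hfne := hf0.ne'
  have hμne := hμ.ne'
  have hddne := hdd.ne'
  set σ2 := μ/f*((1-2*F)*km1 + F^2*minv) - ((1-2*F)*F + F^2)
      - (f*F - f*k1/μ)^2/(f - f^2*m2/μ^2) with hσ2def
  have hNlarge : ∀ᶠ N : ℕ in atTop, 1 ≤ N := eventually_ge_atTop 1
  have hngood : ∀ᶠ N : ℕ in atTop, 1 ≤ n N := by
    have h2 := hn.eventually_const_lt hf0
    filter_upwards [h2] with N h
    rcases Nat.eq_zero_or_pos (n N) with h0 | h1
    · rw [h0] at h; norm_num at h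
    · exact h1
  have hFN : Tendsto (fun N : ℕ => empDF Y y N ω) atTop (𝓝 F) := by
    simp only [empDF, inv_mul_eq_div]; exact hU
  have hsn : Tendsto (fun N : ℕ => (∑ i ∈ Finset.range N, X i ω) / (n N : ℝ)) atTop
      (𝓝 (μ / f)) := by
    apply (hs.div hn hfne).congr'
    filter_upwards [hNlarge] with N hN1
    exact div_div_div_cancel_right₀ (Nat.cast_ne_zero.mpr (by omega)) _ _
  have hns : Tendsto (fun N : ℕ => (n N : ℝ) / (∑ i ∈ Finset.range N, X i ω)) atTop
      (𝓝 (f / μ)) := by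
    apply (hn.div hs hμne).congr'
    filter_upwards [hNlarge] with N hN1
    exact div_div_div_cancel_right₀ (Nat.cast_ne_zero.mpr (by omega)) _ _
  have hA : Tendsto (fun N : ℕ =>
      (∑ i ∈ Finset.range N, incl X n N i ω * (1 - incl X n N i ω)) / N) atTop
      (𝓝 (f - f^2*m2/μ^2)) := by
    have hlim : Tendsto (fun N : ℕ => (n N:ℝ)/N
        - ((n N:ℝ)/N)^2 * ((∑ i ∈ Finset.range N, (X i ω)^2)/N)
          / ((∑ i ∈ Finset.range N, X i ω)/N)^2) atTop (𝓝 (f - f^2*m2/μ^2)) :=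
      hn.sub (((hn.pow 2).mul hT).div (hs.pow 2) (pow_ne_zero 2 hμne))
    apply hlim.congr'
    filter_upwards [hNlarge, hngood] with N hN1 hn1
    have hNne : (N:ℝ) ≠ 0 := Nat.cast_ne_zero.mpr (by omega)
    have hs0 : (0:ℝ) < ∑ i ∈ Finset.range N, X i ω :=
      Finset.sum_pos (fun i _ => hx i) (Finset.nonempty_range_iff.mpr (by omega))
    rw [sA_eq X n N ω hN1 hn1 hx]
    field_simp
  have hB : Tendsto (fun N : ℕ =>
      (∑ i ∈ Finset.range N, (1 - incl X n N i ω) * (indLE Y y i ω - empDF Y y N ω)) / N)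
      atTop (𝓝 (f*F - f*k1/μ)) := by
    have hlim : Tendsto (fun N : ℕ => (n N:ℝ)/N * empDF Y y N ω
        - ((n N:ℝ)/N) * ((∑ i ∈ Finset.range N, X i ω * indLE Y y i ω)/N)
          / ((∑ i ∈ Finset.range N, X i ω)/N)) atTop (𝓝 (f*F - f*k1/μ)) :=
      (hn.mul hFN).sub ((hn.mul hP1).div hs hμne)
    apply hlim.congr'
    filter_upwards [hNlarge, hngood] with N hN1 hn1
    have hNne : (N:ℝ) ≠ 0 := Nat.cast_ne_zero.mpr (by omega)
    have hs0 : (0:ℝ) < ∑ i ∈ Finset.range N, X i ω :=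
      Finset.sum_pos (fun i _ => hx i) (Finset.nonempty_range_iff.mpr (by omega))
    rw [sB_eq Y X n y N ω hN1 hn1 hx]
    field_simp
  have hApos : ∀ᶠ N : ℕ in atTop, 0 <
      ∑ i ∈ Finset.range N, incl X n N i ω * (1 - incl X n N i ω) := by
    filter_upwards [hA.eventually_const_lt (half_lt_self hdd), hNlarge] with N h1 hN1
    have hN0 : (0:ℝ) < N := by exact_mod_cast Nat.lt_of_lt_of_le Nat.zero_lt_one hN1
    have h2 : (0:ℝ) < (∑ i ∈ Finset.range N, incl X n N i ω * (1 - incl X n N i ω)) / N :=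
      lt_trans (half_pos hdd) h1
    rcases div_pos_iff.mp h2 with ⟨h3, _⟩ | ⟨_, h4⟩
    · exact h3
    · linarith
  have hS : Tendsto (fun N : ℕ => SN2 Y X n y N ω / N) atTop (𝓝 σ2) := by
    have hq : Tendsto (fun N : ℕ =>
        ((∑ i ∈ Finset.range N, X i ω) / (n N : ℝ)) *
            ((1 - 2*empDF Y y N ω) * ((∑ i ∈ Finset.range N, (X i ω)⁻¹ * indLE Y y i ω)/N)
              + (empDF Y y N ω)^2 * ((∑ i ∈ Finset.range N, (X i ω)⁻¹)/N))
          - ((1 - 2*empDF Y y N ω) * ((∑ i ∈ Finset.range N, indLE Y y i ω)/N)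
              + (empDF Y y N ω)^2)) atTop
        (𝓝 (μ/f*((1-2*F)*km1 + F^2*minv) - ((1-2*F)*F + F^2))) :=
      (hsn.mul (((tendsto_const_nhds.sub (hFN.const_mul 2)).mul hPm1).add
        ((hFN.pow 2).mul hV))).sub
        ((((tendsto_const_nhds.sub (hFN.const_mul 2)).mul hU).add (hFN.pow 2)))
    have hfull := hq.sub ((hB.pow 2).div hA hddne)
    apply hfull.congr'
    filter_upwards [hNlarge, hngood, hApos] with N hN1 hn1 hA1
    have hNne : (N:ℝ) ≠ 0 := Nat.cast_ne_zero.mpr (by omega)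
    have hs0 : (0:ℝ) < ∑ i ∈ Finset.range N, X i ω :=
      Finset.sum_pos (fun i _ => hx i) (Finset.nonempty_range_iff.mpr (by omega))
    have hnne : (n N : ℝ) ≠ 0 := Nat.cast_ne_zero.mpr (by omega)
    rw [SN2_eq Y X n y N ω hN1 hn1 hx]
    simp only [Pi.div_apply]
    field_simp
    ring
  -- eventual positivity of SN2
  have hSpos : ∀ᶠ N : ℕ in atTop, σ2/2 * N ≤ SN2 Y X n y N ω ∧ 0 < SN2 Y X n y N ω := by
    filter_upwards [hS.eventually_const_lt (half_lt_self hσ), hNlarge] with N h1 hN1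
    have hN0 : (0:ℝ) < N := by exact_mod_cast Nat.lt_of_lt_of_le Nat.zero_lt_one hN1
    have h2 : σ2/2 * N < SN2 Y X n y N ω := (lt_div_iff₀ hN0).mp h1
    refine ⟨le_of_lt h2, lt_of_lt_of_le ?_ (le_of_lt h2)⟩
    positivity
  set c2 := Real.sqrt (σ2/2) with hc2def
  have hc2 : 0 < c2 := Real.sqrt_pos.mpr (half_pos hσ)
  have hsqrtS : ∀ᶠ N : ℕ in atTop,
      c2 * Real.sqrt N ≤ Real.sqrt (SN2 Y X n y N ω) := by
    filter_upwards [hSpos] with N h1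
    rw [hc2def, ← Real.sqrt_mul (le_of_lt (half_pos hσ))]
    exact Real.sqrt_le_sqrt h1.1
  -- bound on the regression coefficient
  set ρ := (f*F - f*k1/μ) / (f - f^2*m2/μ^2) with hρdef
  set C := |ρ| + 1 with hCdef
  have hC0 : (0:ℝ) ≤ C := by positivity
  have hr : Tendsto (fun N : ℕ =>
      (∑ i ∈ Finset.range N, (1 - incl X n N i ω) * (indLE Y y i ω - empDF Y y N ω)) /
      (∑ i ∈ Finset.range N, incl X n N i ω * (1 - incl X n N i ω))) atTop (𝓝 ρ) := by
    apply (hB.div hA hddne).congr'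
    filter_upwards [hNlarge] with N hN1
    exact div_div_div_cancel_right₀ (Nat.cast_ne_zero.mpr (by omega)) _ _
  have hrC : ∀ᶠ N : ℕ in atTop,
      |(∑ i ∈ Finset.range N, (1 - incl X n N i ω) * (indLE Y y i ω - empDF Y y N ω)) /
      (∑ i ∈ Finset.range N, incl X n N i ω * (1 - incl X n N i ω))| ≤ C :=
    hr.abs.eventually_le_const (lt_add_one |ρ|)
  -- sqrt N → ∞
  have hsqrtN : Tendsto (fun N : ℕ => Real.sqrt N) atTop atTop := by
    apply tendsto_atTop_atTop.mpr
    intro b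
    refine ⟨(⌈b⌉₊)^2, fun a ha => ?_⟩
    have h1 : ((⌈b⌉₊:ℝ))^2 ≤ (a:ℝ) := by exact_mod_cast ha
    calc b ≤ (⌈b⌉₊:ℝ) := Nat.le_ceil b
      _ = Real.sqrt (((⌈b⌉₊:ℝ))^2) := (Real.sqrt_sq (Nat.cast_nonneg _)).symm
      _ ≤ Real.sqrt a := Real.sqrt_le_sqrt h1
  have hW2 : ∀ᶠ N : ℕ in atTop, 2*C + 2 ≤ ε * c2 * Real.sqrt N := by
    have h := (hsqrtN.const_mul_atTop (mul_pos hε hc2)).eventually_ge_atTop (2*C+2)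
    filter_upwards [h] with N h1
    linarith [h1]
  have hnsb : ∀ᶠ N : ℕ in atTop,
      f/(2*μ) ≤ (n N : ℝ) / (∑ i ∈ Finset.range N, X i ω) := by
    have hlt : f/(2*μ) < f/μ := by
      rw [div_lt_div_iff₀ (by positivity) hμ]; nlinarith
    filter_upwards [hns.eventually_const_lt hlt] with N h1
    exact le_of_lt h1
  -- the main estimate
  rw [NormedAddCommGroup.tendsto_nhds_zero]
  intro η hη
  -- choose the truncation level M
  have htnn : ∀ M : ℕ, 0 ≤ t M := by
    intro M
    apply ge_of_tendsto (htr M)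
    filter_upwards with N
    apply div_nonneg _ (Nat.cast_nonneg N)
    apply Finset.sum_nonneg
    intro i _
    split
    · exact le_of_lt (inv_pos.mpr (hx i))
    · exact le_refl 0
  have hδpos : 0 < η * σ2 * f / (17 * μ) := by positivity
  obtain ⟨M, hM⟩ := (ht0.eventually_lt_const hδpos).exists
  have hMbd : ∀ᶠ N : ℕ in atTop,
      (M:ℝ) + 1 ≤ f/(2*μ) * (ε*c2/2) * Real.sqrt N := by
    have h := (hsqrtN.const_mul_atTop (by positivity : 0 < f/(2*μ) * (ε*c2/2))).eventually_ge_atTop ((M:ℝ)+1)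
    filter_upwards [h] with N h1
    linarith [h1]
  -- the dominating sequence
  have hb : Tendsto (fun N : ℕ => 8/σ2 * ((∑ i ∈ Finset.range N, X i ω)/(n N : ℝ)) *
      ((∑ i ∈ Finset.range N, if (M:ℝ) < (X i ω)⁻¹ then (X i ω)⁻¹ else 0)/N)) atTop
      (𝓝 (8/σ2 * (μ/f) * t M)) :=
    ((tendsto_const_nhds.mul hsn).mul (htr M))
  have hΛ : 8/σ2 * (μ/f) * t M < η := by
    have hK0 : 0 < 8/σ2 * (μ/f) := by positivity
    have e : 8/σ2 * (μ/f) * (η * σ2 * f / (17 * μ)) = 8*η/17 := by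
      field_simp
    calc 8/σ2 * (μ/f) * t M ≤ 8/σ2 * (μ/f) * (η * σ2 * f / (17 * μ)) :=
          mul_le_mul_of_nonneg_left (le_of_lt hM) (le_of_lt hK0)
      _ = 8*η/17 := e
      _ < η := by linarith
  have hbη := hb.eventually_lt_const hΛ
  filter_upwards [hNlarge, hngood, hrC, hsqrtS, hSpos, hW2, hnsb, hMbd, hbη]
    with N hN1 hn1 hrCN hsqN ⟨hSl, hS0⟩ hW2N hnsbN hMbdN hbηN
  have hNne : (N:ℝ) ≠ 0 := Nat.cast_ne_zero.mpr (by omega)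
  have hs0 : (0:ℝ) < ∑ i ∈ Finset.range N, X i ω :=
    Finset.sum_pos (fun i _ => hx i) (Finset.nonempty_range_iff.mpr (by omega))
  have hn0 : (0:ℝ) < (n N : ℝ) := by exact_mod_cast Nat.lt_of_lt_of_le Nat.zero_lt_one hn1
  set W := ε * c2 * Real.sqrt N with hWdef
  have hW0 : 0 < W := by linarith
  have hterm : ∀ i ∈ (Finset.range N).filter
      (fun i => ε * incl X n N i ω * Real.sqrt (SN2 Y X n y N ω) < |Zin Y X n y i N ω|),
      0 ≤ ((incl X n N i ω)⁻¹ - 1) * (Zin Y X n y i N ω) ^ 2 ∧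
      ((incl X n N i ω)⁻¹ - 1) * (Zin Y X n y i N ω) ^ 2 ≤
        4 * ((∑ j ∈ Finset.range N, X j ω)/(n N : ℝ)) *
          (if (M:ℝ) < (X i ω)⁻¹ then (X i ω)⁻¹ else 0) := by
    intro i hi
    rw [Finset.mem_filter] at hi
    obtain ⟨hiN, hcond⟩ := hi
    have hπpos : 0 < incl X n N i ω := by
      rw [incl]; exact div_pos (mul_pos hn0 (hx i)) hs0
    -- bound on |Z|
    have hu01 : 0 ≤ indLE Y y i ω ∧ indLE Y y i ω ≤ 1 := by
      rcases indLE_cases Y y i ω with h | h <;> rw [h] <;> norm_num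
    have hF01 : 0 ≤ empDF Y y N ω ∧ empDF Y y N ω ≤ 1 := by
      constructor
      · apply mul_nonneg (inv_nonneg.mpr (Nat.cast_nonneg N))
        apply Finset.sum_nonneg
        intro j _
        rcases indLE_cases Y y j ω with h | h <;> rw [h] <;> norm_num
      · rw [empDF]
        have hsum : ∑ j ∈ Finset.range N, indLE Y y j ω ≤ N := by
          calc ∑ j ∈ Finset.range N, indLE Y y j ω ≤ ∑ j ∈ Finset.range N, 1 :=
              Finset.sum_le_sum (fun j _ =>
                (by rcases indLE_cases Y y j ω with h | h <;> rw [h] <;> norm_num))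
            _ = N := by simp
        calc (N:ℝ)⁻¹ * ∑ j ∈ Finset.range N, indLE Y y j ω ≤ (N:ℝ)⁻¹ * N :=
            mul_le_mul_of_nonneg_left hsum (inv_nonneg.mpr (Nat.cast_nonneg N))
          _ = 1 := by field_simp
    have hD : |indLE Y y i ω - empDF Y y N ω| ≤ 1 :=
      abs_le.mpr ⟨by linarith [hu01.1, hF01.2], by linarith [hu01.2, hF01.1]⟩
    have hZbd : |Zin Y X n y i N ω| ≤ 1 + incl X n N i ω * C := by
      rw [Zin, mul_div_assoc]
      refine le_trans (abs_sub _ _) ?_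
      rw [abs_mul, abs_of_pos hπpos]
      have h11 := mul_le_mul_of_nonneg_left hrCN (le_of_lt hπpos)
      linarith [hD, h11]
    -- chain of inequalities
    have hchain : incl X n N i ω * W ≤ ε * incl X n N i ω * Real.sqrt (SN2 Y X n y N ω) := by
      rw [hWdef]
      have h1 := mul_le_mul_of_nonneg_left hsqN (le_of_lt (mul_pos hε hπpos))
      nlinarith [h1]
    have h5 : incl X n N i ω * W < 1 + incl X n N i ω * C :=
      lt_of_le_of_lt hchain (lt_of_lt_of_le hcond hZbd)
    have h6 : incl X n N i ω * W ≤ 2 := by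
      have k1' : 0 ≤ incl X n N i ω * (W/2 - 1 - C) :=
        mul_nonneg (le_of_lt hπpos) (by linarith)
      nlinarith [k1', h5, hπpos.le]
    have hπle : incl X n N i ω ≤ 2 / W := by
      rw [le_div_iff₀ hW0]; exact h6
    have hZ2 : |Zin Y X n y i N ω| ≤ 2 := by
      have h7 : incl X n N i ω * C ≤ (2/W) * C :=
        mul_le_mul_of_nonneg_right hπle hC0
      have h8 : (2/W) * C ≤ 1 := by
        rw [div_mul_eq_mul_div, div_le_one hW0]; linarith
      calc |Zin Y X n y i N ω| ≤ 1 + incl X n N i ω * C := hZbd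
        _ ≤ 1 + 2/W * C := by linarith [h7]
        _ ≤ 2 := by linarith [h8]
    have hZsq : (Zin Y X n y i N ω)^2 ≤ 4 := by
      nlinarith [hZ2, abs_nonneg (Zin Y X n y i N ω), sq_abs (Zin Y X n y i N ω)]
    have hπle1 : incl X n N i ω ≤ 1 := by
      have : 2 / W ≤ 1 := by rw [div_le_one hW0]; linarith
      linarith
    have hfac : 0 ≤ (incl X n N i ω)⁻¹ - 1 := by
      rw [sub_nonneg]
      exact one_le_inv_iff₀.mpr ⟨hπpos, hπle1⟩
    -- x i ⁻¹ is big
    have hxinv : (n N:ℝ)/(∑ j ∈ Finset.range N, X j ω) * (W/2) ≤ (X i ω)⁻¹ := by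
      have hπW : (n N:ℝ) * X i ω / (∑ j ∈ Finset.range N, X j ω) * W ≤ 2 := by
        rw [incl] at h6; exact h6
      have h7 : ((n N:ℝ)/(∑ j ∈ Finset.range N, X j ω) * (W/2)) * X i ω ≤ 1 := by
        have e : ((n N:ℝ)/(∑ j ∈ Finset.range N, X j ω) * (W/2)) * X i ω
            = ((n N:ℝ) * X i ω / (∑ j ∈ Finset.range N, X j ω) * W)/2 := by ring
        rw [e]; linarith
      have h8 : ((n N:ℝ)/(∑ j ∈ Finset.range N, X j ω) * (W/2)) * X i ω ≤ (X i ω)⁻¹ * X i ω := by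
        rw [inv_mul_cancel₀ (hx i).ne']; exact h7
      exact le_of_mul_le_mul_right h8 (hx i)
    have hxiM : (M:ℝ) < (X i ω)⁻¹ := by
      have h9 : f/(2*μ) * (ε*c2/2) * Real.sqrt N = f/(2*μ) * (W/2) := by
        rw [hWdef]; ring
      have h10 : f/(2*μ) * (W/2) ≤ (n N:ℝ)/(∑ j ∈ Finset.range N, X j ω) * (W/2) :=
        mul_le_mul_of_nonneg_right hnsbN (by linarith)
      calc (M:ℝ) < (M:ℝ) + 1 := lt_add_one _
        _ ≤ f/(2*μ) * (ε*c2/2) * Real.sqrt N := hMbdN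
        _ = f/(2*μ) * (W/2) := h9
        _ ≤ (n N:ℝ)/(∑ j ∈ Finset.range N, X j ω) * (W/2) := h10
        _ ≤ (X i ω)⁻¹ := hxinv
    rw [if_pos hxiM]
    constructor
    · exact mul_nonneg hfac (sq_nonneg _)
    · have hπinv : (incl X n N i ω)⁻¹
          = (∑ j ∈ Finset.range N, X j ω)/(n N:ℝ) * (X i ω)⁻¹ := by
        rw [incl, inv_div, div_mul_eq_div_div, div_eq_mul_inv]
      calc ((incl X n N i ω)⁻¹ - 1) * (Zin Y X n y i N ω)^2
          ≤ (incl X n N i ω)⁻¹ * (Zin Y X n y i N ω)^2 :=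
            mul_le_mul_of_nonneg_right (sub_le_self _ zero_le_one) (sq_nonneg _)
        _ ≤ (incl X n N i ω)⁻¹ * 4 :=
            mul_le_mul_of_nonneg_left hZsq (inv_nonneg.mpr (le_of_lt hπpos))
        _ = 4 * ((∑ j ∈ Finset.range N, X j ω)/(n N:ℝ)) * (X i ω)⁻¹ := by
            rw [hπinv]; ring
  have hLnn : 0 ≤ LN2 Y X n y ε N ω :=
    Finset.sum_nonneg (fun i hi => (hterm i hi).1)
  have hLup : LN2 Y X n y ε N ω ≤ 4 * ((∑ j ∈ Finset.range N, X j ω)/(n N:ℝ)) *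
      (∑ i ∈ Finset.range N, if (M:ℝ) < (X i ω)⁻¹ then (X i ω)⁻¹ else 0) := by
    calc LN2 Y X n y ε N ω
        ≤ ∑ i ∈ (Finset.range N).filter
            (fun i => ε * incl X n N i ω * Real.sqrt (SN2 Y X n y N ω) < |Zin Y X n y i N ω|),
            4 * ((∑ j ∈ Finset.range N, X j ω)/(n N:ℝ)) *
              (if (M:ℝ) < (X i ω)⁻¹ then (X i ω)⁻¹ else 0) :=
          Finset.sum_le_sum (fun i hi => (hterm i hi).2)
      _ ≤ ∑ i ∈ Finset.range N,
            4 * ((∑ j ∈ Finset.range N, X j ω)/(n N:ℝ)) *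
              (if (M:ℝ) < (X i ω)⁻¹ then (X i ω)⁻¹ else 0) := by
          apply Finset.sum_le_sum_of_subset_of_nonneg (Finset.filter_subset _ _)
          intro i _ _
          apply mul_nonneg (by positivity)
          split
          · exact le_of_lt (inv_pos.mpr (hx i))
          · exact le_refl 0
      _ = 4 * ((∑ j ∈ Finset.range N, X j ω)/(n N:ℝ)) *
            (∑ i ∈ Finset.range N, if (M:ℝ) < (X i ω)⁻¹ then (X i ω)⁻¹ else 0) := by
          rw [← Finset.mul_sum]
  have hRnn : 0 ≤ ∑ i ∈ Finset.range N, if (M:ℝ) < (X i ω)⁻¹ then (X i ω)⁻¹ else 0 := by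
    apply Finset.sum_nonneg
    intro i _
    split
    · exact le_of_lt (inv_pos.mpr (hx i))
    · exact le_refl 0
  have hN0 : (0:ℝ) < N := by exact_mod_cast Nat.lt_of_lt_of_le Nat.zero_lt_one hN1
  have hfinal : LN2 Y X n y ε N ω / SN2 Y X n y N ω ≤
      8/σ2 * ((∑ i ∈ Finset.range N, X i ω)/(n N : ℝ)) *
      ((∑ i ∈ Finset.range N, if (M:ℝ) < (X i ω)⁻¹ then (X i ω)⁻¹ else 0)/N) := by
    have h2N : 0 < σ2/2 * N := by positivity
    have e : 8/σ2 * ((∑ i ∈ Finset.range N, X i ω)/(n N : ℝ)) *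
        ((∑ i ∈ Finset.range N, if (M:ℝ) < (X i ω)⁻¹ then (X i ω)⁻¹ else 0)/N)
        = (4 * ((∑ j ∈ Finset.range N, X j ω)/(n N:ℝ)) *
          (∑ i ∈ Finset.range N, if (M:ℝ) < (X i ω)⁻¹ then (X i ω)⁻¹ else 0)) / (σ2/2 * N) := by
      field_simp
      ring
    rw [e]
    calc LN2 Y X n y ε N ω / SN2 Y X n y N ω
        ≤ (4 * ((∑ j ∈ Finset.range N, X j ω)/(n N:ℝ)) *
          (∑ i ∈ Finset.range N, if (M:ℝ) < (X i ω)⁻¹ then (X i ω)⁻¹ else 0)) / SN2 Y X n y N ω :=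
          (div_le_div_iff_of_pos_right hS0).mpr hLup
      _ ≤ (4 * ((∑ j ∈ Finset.range N, X j ω)/(n N:ℝ)) *
          (∑ i ∈ Finset.range N, if (M:ℝ) < (X i ω)⁻¹ then (X i ω)⁻¹ else 0)) / (σ2/2 * N) :=
          div_le_div_of_nonneg_left
            (mul_nonneg (by positivity) hRnn) h2N hSl
  rw [Real.norm_eq_abs, abs_of_nonneg (div_nonneg hLnn (le_of_lt hS0))]
  exact lt_of_le_of_lt hfinal hbηN

lemma slln_helper {Ω : Type*} [MeasurableSpace Ω] (P : Measure Ω) [IsProbabilityMeasure P]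
    (Y X : ℕ → Ω → ℝ)
    (hindep : iIndepFun (fun i ω => (Y i ω, X i ω)) P)
    (hident : ∀ i, IdentDistrib (fun ω => (Y i ω, X i ω)) (fun ω => (Y 0 ω, X 0 ω)) P P)
    (g : ℝ × ℝ → ℝ) (hg : Measurable g)
    (hgint : Integrable (fun ω => g (Y 0 ω, X 0 ω)) P) :
    ∀ᵐ ω ∂P, Tendsto (fun N : ℕ => (∑ i ∈ Finset.range N, g (Y i ω, X i ω)) / N) atTop
      (𝓝 (∫ ω, g (Y 0 ω, X 0 ω) ∂P)) := by
  have h := strong_law_ae_real (fun i ω => g (Y i ω, X i ω)) hgint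
    (fun i j hij => ((hindep.indepFun hij).comp hg hg))
    (fun i => (hident i).comp hg)
  exact h

set_option maxHeartbeats 1000000 in
/-- Lemma 5 of the paper: the Lindeberg condition `L_N(ε)²/S_N²(y) → 0` a.s. -/
theorem stmt_7
    {Ω : Type*} [MeasurableSpace Ω] (P : Measure Ω) [IsProbabilityMeasure P]
    (Y X : ℕ → Ω → ℝ)
    (hmeas : ∀ i, Measurable fun ω => (Y i ω, X i ω))
    (hindep : iIndepFun (fun i ω => (Y i ω, X i ω)) P)
    (hident : ∀ i, IdentDistrib (fun ω => (Y i ω, X i ω)) (fun ω => (Y 0 ω, X 0 ω)) P P)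
    (hpos : ∀ i, ∀ᵐ ω ∂P, 0 < X i ω)
    (hm2 : Integrable (fun ω => X 0 ω ^ 2) P)
    (hminv : Integrable (fun ω => (X 0 ω)⁻¹) P)
    (n : ℕ → ℕ) (f : ℝ) (hf0 : 0 < f) (hf1 : f < 1)
    (hfN : Tendsto (fun N : ℕ => (n N : ℝ) / N) atTop (𝓝 f))
    (d : ℝ)
    (hd : d = f * (1 - (∫ ω, X 0 ω ^ 2 ∂P) / (∫ ω, X 0 ω ∂P) ^ 2) +
        f * (1 - f) * ((∫ ω, X 0 ω ^ 2 ∂P) / (∫ ω, X 0 ω ∂P) ^ 2))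
    (hdpos : 0 < d)
    (y : ℝ)
    (hsigma : 0 <
      ((∫ ω, X 0 ω ∂P) / f * (∫ ω, (X 0 ω)⁻¹ * indLE Y y 0 ω ∂P) -
          (P {ω | Y 0 ω ≤ y}).toReal) * (1 - (P {ω | Y 0 ω ≤ y}).toReal) -
        (∫ ω, X 0 ω ∂P) / f *
          ((∫ ω, (X 0 ω)⁻¹ * indLE Y y 0 ω ∂P) -
            (∫ ω, (X 0 ω)⁻¹ ∂P) * (P {ω | Y 0 ω ≤ y}).toReal) *
          (P {ω | Y 0 ω ≤ y}).toReal -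
        f ^ 2 / d *
          ((P {ω | Y 0 ω ≤ y}).toReal -
            (∫ ω, X 0 ω * indLE Y y 0 ω ∂P) / ∫ ω, X 0 ω ∂P) ^ 2) :
    ∀ ε > (0 : ℝ), ∀ᵐ ω ∂P,
      Tendsto (fun N : ℕ => LN2 Y X n y ε N ω / SN2 Y X n y N ω) atTop (𝓝 0) := by
  classical
  have hYm : ∀ i, Measurable (Y i) := fun i => measurable_fst.comp (hmeas i)
  have hXm : ∀ i, Measurable (X i) := fun i => measurable_snd.comp (hmeas i)
  -- integrability of X 0
  have hX0int : Integrable (X 0) P := by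
    apply Integrable.mono' ((integrable_const (1:ℝ)).add hm2) (hXm 0).aestronglyMeasurable
    filter_upwards with ω
    have h : |X 0 ω| ≤ 1 + X 0 ω ^ 2 := by nlinarith [sq_abs (X 0 ω), sq_nonneg (|X 0 ω| - 1)]
    simpa [Real.norm_eq_abs] using h
  -- positivity of the mean
  have hμpos : 0 < ∫ ω, X 0 ω ∂P := by
    rw [integral_pos_iff_support_of_nonneg_ae
      (by filter_upwards [hpos 0] with ω h using le_of_lt h) hX0int]
    have h1 : P {ω | ¬ 0 < X 0 ω} = 0 := by
      have := ae_iff.mp (hpos 0); simpa using this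
    by_contra h
    push_neg at h
    have hz : P (Function.support (X 0)) = 0 := le_antisymm h zero_le
    have hsub : (Set.univ : Set Ω) ⊆ {ω | ¬ 0 < X 0 ω} ∪ Function.support (X 0) := by
      intro ω _
      by_cases hh : 0 < X 0 ω
      · exact Or.inr (ne_of_gt hh)
      · exact Or.inl hh
    have := measure_mono (μ := P) hsub
    rw [measure_univ] at this
    have h2 := le_trans this (measure_union_le _ _)
    rw [h1, hz] at h2
    simp at h2
  have hμne := hμpos.ne'
  have hfne := hf0.ne'
  -- measurable set {Y 0 ≤ y}
  have hsetY : MeasurableSet {ω | Y 0 ω ≤ y} := measurableSet_le (hYm 0) measurable_const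
  -- indicator integral
  have hFeq : ∫ ω, indLE Y y 0 ω ∂P = (P {ω | Y 0 ω ≤ y}).toReal := by
    have : (fun ω => indLE Y y 0 ω) =
        fun ω => Set.indicator {ω | Y 0 ω ≤ y} (fun _ => (1:ℝ)) ω := by
      funext ω
      simp [indLE, Set.indicator_apply, Set.mem_setOf_eq]
    rw [this]
    simpa [Measure.real, Pi.one_def] using integral_indicator_one (μ := P) hsetY
  -- integrabilities
  have hindmeas : Measurable (fun ω => indLE Y y 0 ω) := by
    unfold indLE
    exact Measurable.ite (measurableSet_le (hYm 0) measurable_const)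
      measurable_const measurable_const
  have hind01 : ∀ ω, 0 ≤ indLE Y y 0 ω ∧ indLE Y y 0 ω ≤ 1 := by
    intro ω; rcases indLE_cases Y y 0 ω with h | h <;> rw [h] <;> norm_num
  have hUint : Integrable (fun ω => indLE Y y 0 ω) P := by
    apply Integrable.mono' (integrable_const (1:ℝ)) hindmeas.aestronglyMeasurable
    filter_upwards with ω
    rw [Real.norm_eq_abs, abs_of_nonneg (hind01 ω).1]
    exact (hind01 ω).2
  have hPm1int : Integrable (fun ω => (X 0 ω)⁻¹ * indLE Y y 0 ω) P := by
    apply Integrable.mono' hminv.abs ((hXm 0).inv.mul hindmeas).aestronglyMeasurable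
    filter_upwards with ω
    rw [Real.norm_eq_abs, Pi.mul_apply, Pi.inv_apply, abs_mul]
    calc |(X 0 ω)⁻¹| * |indLE Y y 0 ω| ≤ |(X 0 ω)⁻¹| * 1 := by
          apply mul_le_mul_of_nonneg_left _ (abs_nonneg _)
          rw [abs_of_nonneg (hind01 ω).1]; exact (hind01 ω).2
      _ = |(X 0 ω)⁻¹| := mul_one _
  have hP1int : Integrable (fun ω => X 0 ω * indLE Y y 0 ω) P := by
    apply Integrable.mono' hX0int.abs ((hXm 0).mul hindmeas).aestronglyMeasurable
    filter_upwards with ω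
    rw [Real.norm_eq_abs, Pi.mul_apply, abs_mul]
    calc |X 0 ω| * |indLE Y y 0 ω| ≤ |X 0 ω| * 1 := by
          apply mul_le_mul_of_nonneg_left _ (abs_nonneg _)
          rw [abs_of_nonneg (hind01 ω).1]; exact (hind01 ω).2
      _ = |X 0 ω| := mul_one _
  have htrmeas : ∀ M : ℕ, Measurable (fun ω => if (M:ℝ) < (X 0 ω)⁻¹ then (X 0 ω)⁻¹ else 0) :=
    fun M => Measurable.ite (measurableSet_lt measurable_const (hXm 0).inv)
      (hXm 0).inv measurable_const
  have htrint : ∀ M : ℕ,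
      Integrable (fun ω => if (M:ℝ) < (X 0 ω)⁻¹ then (X 0 ω)⁻¹ else 0) P := by
    intro M
    apply Integrable.mono' hminv.abs (htrmeas M).aestronglyMeasurable
    filter_upwards with ω
    rw [Real.norm_eq_abs]
    split
    · exact le_refl _
    · simp [abs_nonneg]
  -- limit of truncated tails
  have ht0 : Tendsto (fun M : ℕ => ∫ ω, (if (M:ℝ) < (X 0 ω)⁻¹ then (X 0 ω)⁻¹ else 0) ∂P)
      atTop (𝓝 0) := by
    have h := tendsto_integral_of_dominated_convergence (μ := P)
      (F := fun M ω => if (M:ℝ) < (X 0 ω)⁻¹ then (X 0 ω)⁻¹ else 0)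
      (f := fun _ => (0:ℝ)) (fun ω => |(X 0 ω)⁻¹|)
      (fun M => (htrmeas M).aestronglyMeasurable) hminv.abs
      (by
        intro M
        filter_upwards with ω
        rw [Real.norm_eq_abs]
        split
        · exact le_refl _
        · simp [abs_nonneg])
      (by
        filter_upwards with ω
        obtain ⟨K, hK⟩ := exists_nat_ge ((X 0 ω)⁻¹)
        apply tendsto_atTop_of_eventually_const (i₀ := K)
        intro M hM
        rw [if_neg]
        push_neg
        exact le_trans hK (by exact_mod_cast hM))
    simpa using h
  -- strong laws
  have hs_ae := slln_helper P Y X hindep hident (fun p => p.2) measurable_snd hX0int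
  have hT_ae := slln_helper P Y X hindep hident (fun p => p.2 ^ 2)
    (measurable_snd.pow_const 2) hm2
  have hV_ae := slln_helper P Y X hindep hident (fun p => p.2⁻¹) measurable_snd.inv hminv
  have hU_ae := slln_helper P Y X hindep hident (fun p => if p.1 ≤ y then (1:ℝ) else 0)
    (Measurable.ite (measurableSet_le measurable_fst measurable_const)
      measurable_const measurable_const) hUint
  have hPm1_ae := slln_helper P Y X hindep hident
    (fun p => p.2⁻¹ * (if p.1 ≤ y then (1:ℝ) else 0))
    (measurable_snd.inv.mul (Measurable.ite (measurableSet_le measurable_fst measurable_const)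
      measurable_const measurable_const)) hPm1int
  have hP1_ae := slln_helper P Y X hindep hident
    (fun p => p.2 * (if p.1 ≤ y then (1:ℝ) else 0))
    (measurable_snd.mul (Measurable.ite (measurableSet_le measurable_fst measurable_const)
      measurable_const measurable_const)) hP1int
  have hR_ae : ∀ᵐ ω ∂P, ∀ M : ℕ, Tendsto (fun N : ℕ =>
      (∑ i ∈ Finset.range N, if (M:ℝ) < (X i ω)⁻¹ then (X i ω)⁻¹ else 0) / N) atTop
      (𝓝 (∫ ω, (if (M:ℝ) < (X 0 ω)⁻¹ then (X 0 ω)⁻¹ else 0) ∂P)) := by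
    rw [ae_all_iff]
    intro M
    exact slln_helper P Y X hindep hident
      (fun p => if (M:ℝ) < p.2⁻¹ then p.2⁻¹ else 0)
      (Measurable.ite (measurableSet_lt measurable_const measurable_snd.inv)
        measurable_snd.inv measurable_const) (htrint M)
  have hpos_ae : ∀ᵐ ω ∂P, ∀ i, 0 < X i ω := ae_all_iff.mpr hpos
  -- algebraic identifications
  have hd' : d = f - f^2 * (∫ ω, X 0 ω ^ 2 ∂P) / (∫ ω, X 0 ω ∂P)^2 := by
    rw [hd]; ring
  have hdd : 0 < f - f^2 * (∫ ω, X 0 ω ^ 2 ∂P) / (∫ ω, X 0 ω ∂P)^2 := hd' ▸ hdpos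
  have hσkey : 0 < (∫ ω, X 0 ω ∂P)/f *
        ((1 - 2*(P {ω | Y 0 ω ≤ y}).toReal) * (∫ ω, (X 0 ω)⁻¹ * indLE Y y 0 ω ∂P)
          + ((P {ω | Y 0 ω ≤ y}).toReal)^2 * (∫ ω, (X 0 ω)⁻¹ ∂P))
      - ((1 - 2*(P {ω | Y 0 ω ≤ y}).toReal) * (P {ω | Y 0 ω ≤ y}).toReal
          + ((P {ω | Y 0 ω ≤ y}).toReal)^2)
      - (f*(P {ω | Y 0 ω ≤ y}).toReal
          - f*(∫ ω, X 0 ω * indLE Y y 0 ω ∂P)/(∫ ω, X 0 ω ∂P))^2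
        / (f - f^2 * (∫ ω, X 0 ω ^ 2 ∂P) / (∫ ω, X 0 ω ∂P)^2) := by
    have hEq : (∫ ω, X 0 ω ∂P)/f *
        ((1 - 2*(P {ω | Y 0 ω ≤ y}).toReal) * (∫ ω, (X 0 ω)⁻¹ * indLE Y y 0 ω ∂P)
          + ((P {ω | Y 0 ω ≤ y}).toReal)^2 * (∫ ω, (X 0 ω)⁻¹ ∂P))
      - ((1 - 2*(P {ω | Y 0 ω ≤ y}).toReal) * (P {ω | Y 0 ω ≤ y}).toReal
          + ((P {ω | Y 0 ω ≤ y}).toReal)^2)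
      - (f*(P {ω | Y 0 ω ≤ y}).toReal
          - f*(∫ ω, X 0 ω * indLE Y y 0 ω ∂P)/(∫ ω, X 0 ω ∂P))^2
        / (f - f^2 * (∫ ω, X 0 ω ^ 2 ∂P) / (∫ ω, X 0 ω ∂P)^2)
      = ((∫ ω, X 0 ω ∂P) / f * (∫ ω, (X 0 ω)⁻¹ * indLE Y y 0 ω ∂P) -
          (P {ω | Y 0 ω ≤ y}).toReal) * (1 - (P {ω | Y 0 ω ≤ y}).toReal) -
        (∫ ω, X 0 ω ∂P) / f *
          ((∫ ω, (X 0 ω)⁻¹ * indLE Y y 0 ω ∂P) -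
            (∫ ω, (X 0 ω)⁻¹ ∂P) * (P {ω | Y 0 ω ≤ y}).toReal) *
          (P {ω | Y 0 ω ≤ y}).toReal -
        f ^ 2 / d *
          ((P {ω | Y 0 ω ≤ y}).toReal -
            (∫ ω, X 0 ω * indLE Y y 0 ω ∂P) / ∫ ω, X 0 ω ∂P) ^ 2 := by
      rw [← hd']
      have hdne := hdpos.ne'
      field_simp
      ring
    rw [hEq]
    exact hsigma
  intro ε hε
  filter_upwards [hs_ae, hT_ae, hV_ae, hU_ae, hPm1_ae, hP1_ae, hR_ae, hpos_ae]
    with ω h1 h2 h3 h4 h5 h6 h7 h8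
  have h4' : Tendsto (fun N : ℕ => (∑ i ∈ Finset.range N, indLE Y y i ω) / N) atTop
      (𝓝 ((P {ω | Y 0 ω ≤ y}).toReal)) := by
    rw [← hFeq]; exact h4
  exact key Y X n y ε ω hε h8 f (∫ ω, X 0 ω ∂P) (∫ ω, X 0 ω ^ 2 ∂P)
    (∫ ω, (X 0 ω)⁻¹ ∂P) ((P {ω | Y 0 ω ≤ y}).toReal)
    (∫ ω, (X 0 ω)⁻¹ * indLE Y y 0 ω ∂P) (∫ ω, X 0 ω * indLE Y y 0 ω ∂P)
    (fun M => ∫ ω, (if (M:ℝ) < (X 0 ω)⁻¹ then (X 0 ω)⁻¹ else 0) ∂P)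
    hf0 hμpos hfN h1 h2 h3 h4' h5 h6 h7 ht0 hdd hσkey
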